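/- Let O be a valuation ring with fraction field L, X and Y schemes with a proper morphism f : Y → X, and suppose given a morphism i : Spec O → X and a lift k : Spec L → Y of the restriction of i to the generic point. Then there exists a unique morphism i′ : Spec O → Y with f ∘ i′ = i and i′|_{Spec L} = k. -/
import Mathlib

open AlgebraicGeometry CategoryTheory

theorem valuative_criterion_proper_lift
    {X Y : Scheme} (f : Y ⟶ X) [IsProper f]
    (O : Type) [CommRing O] [IsDomain O] [ValuationRing O]
    (L : Type) [Field L] [Algebra O L] [IsFractionRing O L]
    (i : Spec (CommRingCat.of O) ⟶ X) (k : Spec (CommRingCat.of L) ⟶ Y)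
    (hsq : Spec.map (CommRingCat.ofHom (algebraMap O L)) ≫ i = k ≫ f) :
    ∃! i' : Spec (CommRingCat.of O) ⟶ Y,
      i' ≫ f = i ∧ Spec.map (CommRingCat.ofHom (algebraMap O L)) ≫ i' = k := by
  have H : ValuativeCriterion f := by
    have h : IsProper f := inferInstance
    rw [AlgebraicGeometry.IsProper.eq_valuativeCriterion] at h
    exact h.1.1.1
  set S : ValuativeCommSq f := ⟨O, L, k, i, ⟨hsq.symm⟩⟩ with hS
  obtain ⟨u⟩ := H S
  refine ⟨u.default.l, ⟨u.default.fac_right, u.default.fac_left⟩, ?_⟩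
  rintro i' ⟨h1, h2⟩
  have : ({ l := i', fac_left := h2, fac_right := h1 } : S.commSq.LiftStruct) = u.default :=
    u.uniq _
  exact congrArg CommSq.LiftStruct.l this
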